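/- Let O be a finite ELU ontology. If there exist n > |sig(O)| · 2^(2^||O||), a concept ∃r.D ∈ sub(O) on the right-hand side of an inclusion in O, and role names r₁,…,rₙ from O such that O ⊨ D ⊑ ∃r₁.⋯.∃rₙ.⊤, then for every m there exist such a concept and a role sequence of length ≥ m with the same property. Consequently it is decidable whether a given ELU ontology is finitely generating. -/

import Mathlib

namespace DL

/- Basic description-logic framework: concepts, interpretations, ontologies. -/

inductive Concept (Cn R : Type) : Type where
  | top  : Concept Cn R
  | bot  : Concept Cn R
  | name : Cn → Concept Cn R
  | neg  : Concept Cn R → Concept Cn R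
  | conj : Concept Cn R → Concept Cn R → Concept Cn R
  | disj : Concept Cn R → Concept Cn R → Concept Cn R
  | ex   : R → Concept Cn R → Concept Cn R
  | all  : R → Concept Cn R → Concept Cn R
  deriving DecidableEq

namespace Concept
variable {Cn R : Type}

/-- `EL` concepts: only ⊤, concept names, ⊓ and ∃r.C. -/
def isEL : Concept Cn R → Prop
  | top => True
  | bot => False
  | name _ => True
  | neg _ => False
  | conj c d => c.isEL ∧ d.isEL
  | disj _ _ => False
  | ex _ c => c.isEL
  | all _ _ => False

/-- `ELU` concepts: additionally allow ⊔. -/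
def isELU : Concept Cn R → Prop
  | top => True
  | bot => False
  | name _ => True
  | neg _ => False
  | conj c d => c.isELU ∧ d.isELU
  | disj c d => c.isELU ∧ d.isELU
  | ex _ c => c.isELU
  | all _ _ => False

/-- `EL⊥` concepts. -/
def isELbot : Concept Cn R → Prop
  | top => True
  | bot => True
  | name _ => True
  | neg _ => False
  | conj c d => c.isELbot ∧ d.isELbot
  | disj _ _ => False
  | ex _ c => c.isELbot
  | all _ _ => False

/-- `ELU⊥` concepts. -/
def isELUbot : Concept Cn R → Prop
  | top => True
  | bot => True
  | name _ => True
  | neg _ => False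
  | conj c d => c.isELUbot ∧ d.isELUbot
  | disj c d => c.isELUbot ∧ d.isELUbot
  | ex _ c => c.isELUbot
  | all _ _ => False

/-- the nesting depth of ∃/∀ restrictions. -/
def depth : Concept Cn R → ℕ
  | top => 0
  | bot => 0
  | name _ => 0
  | neg c => c.depth
  | conj c d => max c.depth d.depth
  | disj c d => max c.depth d.depth
  | ex _ c => c.depth + 1
  | all _ c => c.depth + 1

/-- size of a concept (occurrences of symbols). -/
def size : Concept Cn R → ℕ
  | top => 1
  | bot => 1
  | name _ => 1
  | neg c => c.size + 1
  | conj c d => c.size + d.size + 1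
  | disj c d => c.size + d.size + 1
  | ex _ c => c.size + 2
  | all _ c => c.size + 2

/-- set of subconcepts. -/
def sub : Concept Cn R → Set (Concept Cn R)
  | top => {top}
  | bot => {bot}
  | name A => {name A}
  | neg c => insert (neg c) c.sub
  | conj c d => insert (conj c d) (c.sub ∪ d.sub)
  | disj c d => insert (disj c d) (c.sub ∪ d.sub)
  | ex r c => insert (ex r c) c.sub
  | all r c => insert (all r c) c.sub

/-- concept names occurring in a concept. -/
def names : Concept Cn R → Set Cn
  | top => ∅
  | bot => ∅
  | name A => {A}
  | neg c => c.names
  | conj c d => c.names ∪ d.names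
  | disj c d => c.names ∪ d.names
  | ex _ c => c.names
  | all _ c => c.names

/-- role names occurring in a concept. -/
def roles : Concept Cn R → Set R
  | top => ∅
  | bot => ∅
  | name _ => ∅
  | neg c => c.roles
  | conj c d => c.roles ∪ d.roles
  | disj c d => c.roles ∪ d.roles
  | ex r c => insert r c.roles
  | all r c => insert r c.roles

/-- top-level conjuncts of a concept. -/
def tlConj : Concept Cn R → Set (Concept Cn R)
  | conj c d => c.tlConj ∪ d.tlConj
  | c => {c}

end Concept

/-- n-fold nesting of ∃r applied to a concept. -/
def exN {Cn R : Type} (r : R) : ℕ → Concept Cn R → Concept Cn R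
  | 0, c => c
  | n + 1, c => Concept.ex r (exN r n c)

/-- An interpretation: a domain together with extensions of concept and role names. -/
structure Interp (Cn R : Type) : Type 1 where
  Dom : Type
  cI : Cn → Set Dom
  rI : R → Set (Dom × Dom)

/-- Semantics of concepts. -/
def Interp.interp {Cn R : Type} (I : Interp Cn R) : Concept Cn R → Set I.Dom
  | .top => Set.univ
  | .bot => ∅
  | .name A => I.cI A
  | .neg c => (I.interp c)ᶜ
  | .conj c d => I.interp c ∩ I.interp d
  | .disj c d => I.interp c ∪ I.interp d
  | .ex r c => {x | ∃ y, (x, y) ∈ I.rI r ∧ y ∈ I.interp c}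
  | .all r c => {x | ∀ y, (x, y) ∈ I.rI r → y ∈ I.interp c}

/-- An ontology: a set of concept inclusions `C ⊑ D`, coded as pairs `(C, D)`. -/
abbrev Ontology (Cn R : Type) := Set (Concept Cn R × Concept Cn R)

/-- `I` is a model of the ontology `O`. -/
def Interp.isModel {Cn R : Type} (I : Interp Cn R) (O : Ontology Cn R) : Prop :=
  ∀ ci ∈ O, I.interp ci.1 ⊆ I.interp ci.2

/-- `O ⊨ c ⊑ d`. -/
def entails {Cn R : Type} (O : Ontology Cn R) (c d : Concept Cn R) : Prop :=
  ∀ I : Interp Cn R, I.isModel O → I.interp c ⊆ I.interp d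

/-- logical equivalence (w.r.t. the empty ontology). -/
def lequiv {Cn R : Type} (c d : Concept Cn R) : Prop :=
  entails ∅ c d ∧ entails ∅ d c

/-- set of subconcepts of an ontology. -/
def subO {Cn R : Type} (O : Ontology Cn R) : Set (Concept Cn R) :=
  {F | ∃ ci ∈ O, F ∈ ci.1.sub ∪ ci.2.sub}

/-- concept names of an ontology. -/
def sigC {Cn R : Type} (O : Ontology Cn R) : Set Cn :=
  {A | ∃ ci ∈ O, A ∈ ci.1.names ∪ ci.2.names}

/-- role names of an ontology. -/
def sigR {Cn R : Type} (O : Ontology Cn R) : Set R :=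
  {r | ∃ ci ∈ O, r ∈ ci.1.roles ∪ ci.2.roles}


/- STATEMENT 6: pumping lemma behind decidability of being finitely generating.
   (The concluding sentence "consequently it is decidable whether a given ELU ontology
   is finitely generating" is a meta-level computability claim; the mathematical content
   formalized here is the pumping implication from which decidability follows.) -/

/-- `∃r₁.⋯.∃rₙ.⊤` for a list of role names. -/
def exChain {Cn R : Type} : List R → Concept Cn R
  | [] => .top
  | r :: l => .ex r (exChain l)

namespace Concept
variable {Cn R : Type} [DecidableEq Cn] [DecidableEq R]

/-- concept names of a concept, as a finset. -/
def namesF : Concept Cn R → Finset Cn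
  | top => ∅
  | bot => ∅
  | name A => {A}
  | neg c => c.namesF
  | conj c d => c.namesF ∪ d.namesF
  | disj c d => c.namesF ∪ d.namesF
  | ex _ c => c.namesF
  | all _ c => c.namesF

/-- role names of a concept, as a finset. -/
def rolesF : Concept Cn R → Finset R
  | top => ∅
  | bot => ∅
  | name _ => ∅
  | neg c => c.rolesF
  | conj c d => c.rolesF ∪ d.rolesF
  | disj c d => c.rolesF ∪ d.rolesF
  | ex r c => insert r c.rolesF
  | all r c => insert r c.rolesF

end Concept

/-- number of concept and role names occurring in a finite ontology, i.e. |sig(O)|. -/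
def sigCard {Cn R : Type} [DecidableEq Cn] [DecidableEq R]
    (O : Finset (Concept Cn R × Concept Cn R)) : ℕ :=
  (O.biUnion fun ci => ci.1.namesF ∪ ci.2.namesF).card +
  (O.biUnion fun ci => ci.1.rolesF ∪ ci.2.rolesF).card

/-- the size ||O|| of a finite ontology. -/
def sizeOnt {Cn R : Type} [DecidableEq Cn] [DecidableEq R]
    (O : Finset (Concept Cn R × Concept Cn R)) : ℕ :=
  O.sum fun ci => ci.1.size + ci.2.size

set_option linter.unusedSectionVars false
open Classical

namespace Concept
variable {Cn R : Type} [DecidableEq Cn] [DecidableEq R]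

/-- subconcepts as a finset. -/
def subF : Concept Cn R → Finset (Concept Cn R)
  | top => {top}
  | bot => {bot}
  | name A => {name A}
  | neg c => insert (neg c) c.subF
  | conj c d => insert (conj c d) (c.subF ∪ d.subF)
  | disj c d => insert (disj c d) (c.subF ∪ d.subF)
  | ex r c => insert (ex r c) c.subF
  | all r c => insert (all r c) c.subF

lemma mem_subF_iff {c C : Concept Cn R} : C ∈ c.subF ↔ C ∈ c.sub := by
  induction c with
  | top => simp [subF, sub]
  | bot => simp [subF, sub]
  | name A => simp [subF, sub]
  | neg c ih => simp [subF, sub, ih]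
  | conj c d ih ih' => simp [subF, sub, ih, ih']
  | disj c d ih ih' => simp [subF, sub, ih, ih']
  | ex r c ih => simp [subF, sub, ih]
  | all r c ih => simp [subF, sub, ih]

lemma self_mem_subF (c : Concept Cn R) : c ∈ c.subF := by
  cases c <;> simp [subF]

lemma subF_trans {c d : Concept Cn R} (h : d ∈ c.subF) : d.subF ⊆ c.subF := by
  induction c with
  | top => simp [subF] at h; subst h; exact Finset.Subset.refl _
  | bot => simp [subF] at h; subst h; exact Finset.Subset.refl _
  | name A => simp [subF] at h; subst h; exact Finset.Subset.refl _
  | neg c ih =>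
      simp [subF] at h
      rcases h with h | h
      · subst h; exact Finset.Subset.refl _
      · exact (ih h).trans (Finset.subset_insert _ _)
  | conj c c' ih ih' =>
      simp [subF] at h
      rcases h with h | h | h
      · subst h; exact Finset.Subset.refl _
      · exact (ih h).trans ((Finset.subset_union_left).trans (Finset.subset_insert _ _))
      · exact (ih' h).trans ((Finset.subset_union_right).trans (Finset.subset_insert _ _))
  | disj c c' ih ih' =>
      simp [subF] at h
      rcases h with h | h | h
      · subst h; exact Finset.Subset.refl _
      · exact (ih h).trans ((Finset.subset_union_left).trans (Finset.subset_insert _ _))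
      · exact (ih' h).trans ((Finset.subset_union_right).trans (Finset.subset_insert _ _))
  | ex r c ih =>
      simp [subF] at h
      rcases h with h | h
      · subst h; exact Finset.Subset.refl _
      · exact (ih h).trans (Finset.subset_insert _ _)
  | all r c ih =>
      simp [subF] at h
      rcases h with h | h
      · subst h; exact Finset.Subset.refl _
      · exact (ih h).trans (Finset.subset_insert _ _)

lemma card_subF_le (c : Concept Cn R) : c.subF.card ≤ c.size := by
  induction c with
  | top => simp [subF, size]
  | bot => simp [subF, size]
  | name A => simp [subF, size]
  | neg c ih =>
      calc (insert (neg c) c.subF).card ≤ c.subF.card + 1 := Finset.card_insert_le _ _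
      _ ≤ c.size + 1 := by omega
  | conj c d ih ih' =>
      calc (insert (conj c d) (c.subF ∪ d.subF)).card ≤ (c.subF ∪ d.subF).card + 1 :=
            Finset.card_insert_le _ _
      _ ≤ c.subF.card + d.subF.card + 1 := by
            have := Finset.card_union_le c.subF d.subF; omega
      _ ≤ c.size + d.size + 1 := by omega
  | disj c d ih ih' =>
      calc (insert (disj c d) (c.subF ∪ d.subF)).card ≤ (c.subF ∪ d.subF).card + 1 :=
            Finset.card_insert_le _ _
      _ ≤ c.subF.card + d.subF.card + 1 := by
            have := Finset.card_union_le c.subF d.subF; omega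
      _ ≤ c.size + d.size + 1 := by omega
  | ex r c ih =>
      calc (insert (ex r c) c.subF).card ≤ c.subF.card + 1 := Finset.card_insert_le _ _
      _ ≤ c.size + 2 := by omega
  | all r c ih =>
      calc (insert (all r c) c.subF).card ≤ c.subF.card + 1 := Finset.card_insert_le _ _
      _ ≤ c.size + 2 := by omega

lemma isELU_of_mem_subF {c d : Concept Cn R} (hc : c.isELU) (h : d ∈ c.subF) : d.isELU := by
  induction c with
  | top => simp [subF] at h; subst h; trivial
  | bot => exact absurd hc (by simp [isELU])
  | name A => simp [subF] at h; subst h; trivial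
  | neg c ih => exact absurd hc (by simp [isELU])
  | conj c c' ih ih' =>
      simp [subF] at h
      rcases h with h | h | h
      · subst h; exact hc
      · exact ih hc.1 h
      · exact ih' hc.2 h
  | disj c c' ih ih' =>
      simp [subF] at h
      rcases h with h | h | h
      · subst h; exact hc
      · exact ih hc.1 h
      · exact ih' hc.2 h
  | ex r c ih =>
      simp [subF] at h
      rcases h with h | h
      · subst h; exact hc
      · exact ih hc h
  | all r c ih => exact absurd hc (by simp [isELU])

lemma mem_rolesF_iff {c : Concept Cn R} {r : R} : r ∈ c.rolesF ↔ r ∈ c.roles := by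
  induction c with
  | top => simp [rolesF, roles]
  | bot => simp [rolesF, roles]
  | name A => simp [rolesF, roles]
  | neg c ih => simpa [rolesF, roles] using ih
  | conj c d ih ih' => simp [rolesF, roles, ih, ih']
  | disj c d ih ih' => simp [rolesF, roles, ih, ih']
  | ex s c ih => simp [rolesF, roles, ih]
  | all s c ih => simp [rolesF, roles, ih]

end Concept

variable {Cn R : Type}

/-- reachability along a word of role names. -/
def ReachL (I : Interp Cn R) : List R → I.Dom → I.Dom → Prop
  | [], x, y => x = y
  | r :: l, x, y => ∃ z, (x, z) ∈ I.rI r ∧ ReachL I l z y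

lemma mem_exChain_iff {I : Interp Cn R} {l : List R} {x : I.Dom} :
    x ∈ I.interp (exChain l) ↔ ∃ y, ReachL I l x y := by
  induction l generalizing x with
  | nil => simp [exChain, Interp.interp, ReachL]
  | cons r l ih =>
      constructor
      · rintro ⟨z, hz, hmem⟩
        obtain ⟨y, hy⟩ := ih.1 hmem
        exact ⟨y, z, hz, hy⟩
      · rintro ⟨y, z, hz, hy⟩
        exact ⟨z, hz, ih.2 ⟨y, hy⟩⟩

lemma ReachL_append {I : Interp Cn R} {u v : List R} {x y : I.Dom} :
    ReachL I (u ++ v) x y ↔ ∃ z, ReachL I u x z ∧ ReachL I v z y := by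
  induction u generalizing x with
  | nil => simp [ReachL]
  | cons r u ih =>
      constructor
      · rintro ⟨z, hz, h⟩
        obtain ⟨w, h1, h2⟩ := ih.1 h
        exact ⟨w, ⟨z, hz, h1⟩, h2⟩
      · rintro ⟨w, ⟨z, hz, h1⟩, h2⟩
        exact ⟨z, hz, ih.2 ⟨w, h1, h2⟩⟩

variable [DecidableEq Cn] [DecidableEq R]

/-- the `F`-type of an element: the set of concepts in `F` it satisfies. -/
noncomputable def tyF (F : Finset (Concept Cn R)) (I : Interp Cn R) (x : I.Dom) :
    Finset (Concept Cn R) :=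
  F.filter (fun C => x ∈ I.interp C)

lemma mem_tyF {F : Finset (Concept Cn R)} {I : Interp Cn R} {x : I.Dom}
    {C : Concept Cn R} : C ∈ tyF F I x ↔ C ∈ F ∧ x ∈ I.interp C := by
  simp [tyF]

lemma tyF_subset {F : Finset (Concept Cn R)} {I : Interp Cn R} {x : I.Dom} :
    tyF F I x ⊆ F := Finset.filter_subset _ _

/-- every element whose `F`-type is `t` satisfies `G`, in every model of `O`. -/
def TEnt (F : Finset (Concept Cn R)) (O : Ontology Cn R)
    (t : Finset (Concept Cn R)) (G : Concept Cn R) : Prop :=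
  ∀ I : Interp Cn R, I.isModel O → ∀ x : I.Dom, tyF F I x = t → x ∈ I.interp G

section Surgery

variable {Cn R : Type} [DecidableEq Cn] [DecidableEq R]
variable (I : Interp Cn R) (J : I.Dom → Interp Cn R) (z : ∀ y, (J y).Dom) (x : I.Dom) (s : R)

/-- edges of the surgery model. -/
def surgEdge (p : R) :
    (I.Dom ⊕ Σ y : I.Dom, (J y).Dom) → (I.Dom ⊕ Σ y : I.Dom, (J y).Dom) → Prop
  | Sum.inl a, Sum.inl b => (a, b) ∈ I.rI p ∧ ¬(p = s ∧ a = x)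
  | Sum.inl a, Sum.inr q => p = s ∧ a = x ∧ (x, q.1) ∈ I.rI s ∧ q.2 = z q.1
  | Sum.inr _, Sum.inl _ => False
  | Sum.inr q, Sum.inr q' => ∃ e : (J q'.1).Dom, q = ⟨q'.1, e⟩ ∧ (e, q'.2) ∈ (J q'.1).rI p

/-- the surgery model: `I` with all `s`-edges out of `x` redirected into fresh copies. -/
def surg : Interp Cn R where
  Dom := I.Dom ⊕ Σ y : I.Dom, (J y).Dom
  cI A := {d | Sum.elim (fun a => a ∈ I.cI A) (fun q => q.2 ∈ (J q.1).cI A) d}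
  rI p := {q | surgEdge I J z x s p q.1 q.2}

lemma surg_rI_inr_same {p : R} {y : I.Dom} {e e' : (J y).Dom} :
    surgEdge I J z x s p (Sum.inr ⟨y, e⟩) (Sum.inr ⟨y, e'⟩) ↔ (e, e') ∈ (J y).rI p := by
  constructor
  · rintro ⟨e0, heq, hh⟩
    cases heq
    exact hh
  · intro h
    exact ⟨e, rfl, h⟩

lemma surg_rI_inr_iff {p : R} {y : I.Dom} {e : (J y).Dom}
    {w : I.Dom ⊕ Σ y : I.Dom, (J y).Dom} :
    surgEdge I J z x s p (Sum.inr ⟨y, e⟩) w ↔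
      ∃ e' : (J y).Dom, w = Sum.inr ⟨y, e'⟩ ∧ (e, e') ∈ (J y).rI p := by
  constructor
  · intro h
    match w with
    | Sum.inl b => exact absurd h (by simp [surgEdge])
    | Sum.inr ⟨y', e'⟩ =>
        obtain ⟨e0, heq, hh⟩ := h
        cases heq
        exact ⟨e', rfl, hh⟩
  · rintro ⟨e', rfl, h⟩
    exact (surg_rI_inr_same I J z x s).2 h

/-- chain concepts are preserved at `inr`-elements. -/
lemma surg_chain_inr (l : List R) :
    ∀ (y : I.Dom) (e : (J y).Dom),
      Sum.inr ⟨y, e⟩ ∈ (surg I J z x s).interp (exChain l) ↔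
        e ∈ (J y).interp (exChain l) := by
  induction l with
  | nil => intro y e; simp [exChain, Interp.interp]; trivial
  | cons p l ih =>
      intro y e
      constructor
      · rintro ⟨w, hw, hmem⟩
        obtain ⟨e', rfl, hee'⟩ := (surg_rI_inr_iff I J z x s).1 hw
        exact ⟨e', hee', (ih y e').1 hmem⟩
      · rintro ⟨e', hee', hmem⟩
        exact ⟨Sum.inr ⟨y, e'⟩, (surg_rI_inr_same I J z x s).2 hee', (ih y e').2 hmem⟩

/-- preservation of `F`-concepts under the surgery. -/
lemma surg_preserve (F : Finset (Concept Cn R))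
    (hFsub : ∀ C ∈ F, Concept.subF C ⊆ F)
    (hFELU : ∀ C ∈ F, Concept.isELU C)
    (hty : ∀ y, (x, y) ∈ I.rI s → tyF F (J y) (z y) = tyF F I y)
    (C : Concept Cn R) (hC : C ∈ F) :
    (∀ a : I.Dom, (Sum.inl a ∈ (surg I J z x s).interp C ↔ a ∈ I.interp C)) ∧
    (∀ (y : I.Dom) (e : (J y).Dom),
      (Sum.inr ⟨y, e⟩ ∈ (surg I J z x s).interp C ↔ e ∈ (J y).interp C)) := by
  induction C with
  | top => exact ⟨fun a => by simp [Interp.interp]; trivial, fun y e => by simp [Interp.interp]; trivial⟩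
  | bot => exact absurd (hFELU _ hC) (by simp [Concept.isELU])
  | name A =>
      exact ⟨fun a => by simp [Interp.interp, surg, Set.mem_setOf_eq]; exact Iff.rfl,
             fun y e => by simp [Interp.interp, surg, Set.mem_setOf_eq]; exact Iff.rfl⟩
  | neg c ih => exact absurd (hFELU _ hC) (by simp [Concept.isELU])
  | conj c d ih ih' =>
      have hc : c ∈ F := hFsub _ hC (by simp [Concept.subF, Concept.self_mem_subF])
      have hd : d ∈ F := hFsub _ hC (by simp [Concept.subF, Concept.self_mem_subF])
      obtain ⟨ih1, ih2⟩ := ih hc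
      obtain ⟨ih1', ih2'⟩ := ih' hd
      constructor
      · intro a
        simp only [Interp.interp, Set.mem_inter_iff, ih1 a, ih1' a]
        exact and_congr (ih1 a) (ih1' a)
      · intro y e
        simp only [Interp.interp, Set.mem_inter_iff, ih2 y e, ih2' y e]
        exact and_congr (ih2 y e) (ih2' y e)
  | disj c d ih ih' =>
      have hc : c ∈ F := hFsub _ hC (by simp [Concept.subF, Concept.self_mem_subF])
      have hd : d ∈ F := hFsub _ hC (by simp [Concept.subF, Concept.self_mem_subF])
      obtain ⟨ih1, ih2⟩ := ih hc
      obtain ⟨ih1', ih2'⟩ := ih' hd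
      constructor
      · intro a
        simp only [Interp.interp, Set.mem_union, ih1 a, ih1' a]
        exact or_congr (ih1 a) (ih1' a)
      · intro y e
        simp only [Interp.interp, Set.mem_union, ih2 y e, ih2' y e]
        exact or_congr (ih2 y e) (ih2' y e)
  | ex p c ih =>
      have hc : c ∈ F := hFsub _ hC (by simp [Concept.subF, Concept.self_mem_subF])
      obtain ⟨ih1, ih2⟩ := ih hc
      constructor
      · intro a
        by_cases hpa : p = s ∧ a = x
        · obtain ⟨rfl, rfl⟩ := hpa
          constructor
          · rintro ⟨w, hw, hmem⟩
            match w with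
            | Sum.inl b =>
                obtain ⟨-, hbad⟩ := hw
                exact absurd ⟨rfl, rfl⟩ hbad
            | Sum.inr ⟨y, e⟩ =>
                obtain ⟨-, -, hsucc0, he0⟩ := hw
                have hsucc : (a, y) ∈ I.rI p := hsucc0
                have he : e = z y := he0
                subst he
                have h1 : z y ∈ (J y).interp c := (ih2 y (z y)).1 hmem
                have h2 : y ∈ I.interp c := by
                  have := Finset.ext_iff.1 (hty y hsucc) c
                  simp only [mem_tyF, hc, true_and] at this
                  exact this.1 h1
                exact ⟨y, hsucc, h2⟩
          · rintro ⟨y, hsucc, hmem⟩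
            refine ⟨Sum.inr ⟨y, z y⟩, ⟨rfl, rfl, hsucc, rfl⟩, ?_⟩
            refine (ih2 y (z y)).2 ?_
            have := Finset.ext_iff.1 (hty y hsucc) c
            simp only [mem_tyF, hc, true_and] at this
            exact this.2 hmem
        · constructor
          · rintro ⟨w, hw, hmem⟩
            match w with
            | Sum.inl b =>
                obtain ⟨hedge, -⟩ := hw
                exact ⟨b, hedge, (ih1 b).1 hmem⟩
            | Sum.inr ⟨y, e⟩ =>
                obtain ⟨rfl, rfl, -, -⟩ := hw
                exact absurd ⟨rfl, rfl⟩ hpa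
          · rintro ⟨b, hedge, hmem⟩
            exact ⟨Sum.inl b, ⟨hedge, hpa⟩, (ih1 b).2 hmem⟩
      · intro y e
        constructor
        · rintro ⟨w, hw, hmem⟩
          obtain ⟨e', rfl, hee'⟩ := (surg_rI_inr_iff I J z x s).1 hw
          exact ⟨e', hee', (ih2 y e').1 hmem⟩
        · rintro ⟨e', hee', hmem⟩
          exact ⟨Sum.inr ⟨y, e'⟩, (surg_rI_inr_same I J z x s).2 hee', (ih2 y e').2 hmem⟩
  | all p c ih => exact absurd (hFELU _ hC) (by simp [Concept.isELU])

end Surgery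

/-- Decomposition: a witness for an entailed chain can be chosen whose type entails the rest. -/
lemma decomp {Cn R : Type} [DecidableEq Cn] [DecidableEq R]
    (F : Finset (Concept Cn R)) (O : Ontology Cn R)
    (hFsub : ∀ C ∈ F, Concept.subF C ⊆ F)
    (hFELU : ∀ C ∈ F, Concept.isELU C)
    (hOF : ∀ ci ∈ O, ci.1 ∈ F ∧ ci.2 ∈ F)
    (s : R) (l : List R) (t : Finset (Concept Cn R))
    (H : TEnt F O t (exChain (s :: l)))
    (I : Interp Cn R) (hI : I.isModel O) (x : I.Dom) (hx : tyF F I x = t) :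
    ∃ y, (x, y) ∈ I.rI s ∧ TEnt F O (tyF F I y) (exChain l) := by
  by_contra hcon
  push_neg at hcon
  have hch : ∀ y : I.Dom, ∃ (Jy : Interp Cn R) (zy : Jy.Dom), Jy.isModel O ∧
      ((x, y) ∈ I.rI s → (tyF F Jy zy = tyF F I y ∧ zy ∉ Jy.interp (exChain l))) := by
    intro y
    by_cases hy : (x, y) ∈ I.rI s
    · have hne := hcon y hy
      rw [TEnt] at hne
      push_neg at hne
      obtain ⟨Jy, hJ, zy, hty, hnm⟩ := hne
      exact ⟨Jy, zy, hJ, fun _ => ⟨hty, hnm⟩⟩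
    · exact ⟨I, y, hI, fun h => absurd h hy⟩
  choose J zf hmod hcex using hch
  have hty' : ∀ y, (x, y) ∈ I.rI s → tyF F (J y) (zf y) = tyF F I y :=
    fun y h => (hcex y h).1
  have hpres := fun C hC => surg_preserve I J zf x s F hFsub hFELU hty' C hC
  have hmodel : (surg I J zf x s).isModel O := by
    intro ci hci d hd
    obtain ⟨h1, h2⟩ := hOF ci hci
    match d with
    | Sum.inl a =>
        exact ((hpres ci.2 h2).1 a).2 (hI ci hci (((hpres ci.1 h1).1 a).1 hd))
    | Sum.inr ⟨y, e⟩ =>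
        exact ((hpres ci.2 h2).2 y e).2 (hmod y ci hci (((hpres ci.1 h1).2 y e).1 hd))
  have htyx : tyF F (surg I J zf x s) (Sum.inl x) = t := by
    rw [← hx]
    ext C
    simp only [mem_tyF]
    exact (mem_tyF (I := surg I J zf x s)).trans (and_congr_right (fun hC => (hpres C hC).1 x))
  have hmemx := H (surg I J zf x s) hmodel (Sum.inl x) htyx
  obtain ⟨w, hw, hmem⟩ := hmemx
  match w with
  | Sum.inl b =>
      obtain ⟨-, hbad⟩ := hw
      exact absurd ⟨rfl, rfl⟩ hbad
  | Sum.inr ⟨y, e⟩ =>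
      obtain ⟨-, -, hsucc0, he0⟩ := hw
      have hsucc : (x, y) ∈ I.rI s := hsucc0
      have he : e = zf y := he0
      subst he
      have hz : zf y ∈ (J y).interp (exChain l) :=
        (surg_chain_inr I J zf x s l y (zf y)).1 hmem
      exact absurd hz (hcex y hsucc).2

theorem stmt6' {Cn R : Type} [DecidableEq Cn] [DecidableEq R]
    (O : Finset (Concept Cn R × Concept Cn R))
    (hO : ∀ ci ∈ O, ci.1.isELU ∧ ci.2.isELU)
    (n : ℕ) (hn : sigCard O * 2 ^ (2 ^ sizeOnt O) < n)
    (r : R) (D : Concept Cn R) (rs : List R)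
    (hlen : rs.length = n)
    (hrs : ∀ s ∈ rs, s ∈ sigR (↑O : Ontology Cn R))
    (hD : ∃ ci ∈ O, Concept.ex r D ∈ ci.2.sub)
    (hent : entails (↑O : Ontology Cn R) D (exChain rs)) :
    ∀ m : ℕ, ∃ (r' : R) (D' : Concept Cn R) (rs' : List R),
      m ≤ rs'.length ∧ (∀ s ∈ rs', s ∈ sigR (↑O : Ontology Cn R)) ∧
      (∃ ci ∈ O, Concept.ex r' D' ∈ ci.2.sub) ∧
      entails (↑O : Ontology Cn R) D' (exChain rs') := by
  classical
  intro m
  -- the finite, sub-closed set of relevant concepts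
  set FO : Finset (Concept Cn R) := O.biUnion (fun ci => ci.1.subF ∪ ci.2.subF) with hFO
  have hFsub : ∀ C ∈ FO, Concept.subF C ⊆ FO := by
    intro C hC
    rw [hFO, Finset.mem_biUnion] at hC
    obtain ⟨ci, hci, hmem⟩ := hC
    rw [Finset.mem_union] at hmem
    intro E hE
    rw [hFO, Finset.mem_biUnion]
    refine ⟨ci, hci, ?_⟩
    rw [Finset.mem_union]
    rcases hmem with h | h
    · exact Or.inl (Concept.subF_trans h hE)
    · exact Or.inr (Concept.subF_trans h hE)
  have hFELU : ∀ C ∈ FO, Concept.isELU C := by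
    intro C hC
    rw [hFO, Finset.mem_biUnion] at hC
    obtain ⟨ci, hci, hmem⟩ := hC
    rw [Finset.mem_union] at hmem
    rcases hmem with h | h
    · exact Concept.isELU_of_mem_subF (hO ci hci).1 h
    · exact Concept.isELU_of_mem_subF (hO ci hci).2 h
  have hOF : ∀ ci ∈ (↑O : Ontology Cn R), ci.1 ∈ FO ∧ ci.2 ∈ FO := by
    intro ci hci
    rw [Finset.mem_coe] at hci
    constructor <;>
      · rw [hFO, Finset.mem_biUnion]
        exact ⟨ci, hci, by rw [Finset.mem_union]
                           first
                           | exact Or.inl (Concept.self_mem_subF _)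
                           | exact Or.inr (Concept.self_mem_subF _)⟩
  have hDFO : D ∈ FO := by
    obtain ⟨ci, hci, hsub⟩ := hD
    have h1 : Concept.ex r D ∈ ci.2.subF := Concept.mem_subF_iff.2 hsub
    have h2 : D ∈ (Concept.ex r D).subF := by
      simp [Concept.subF, Concept.self_mem_subF]
    have h3 : D ∈ ci.2.subF := Concept.subF_trans h1 h2
    rw [hFO, Finset.mem_biUnion]
    exact ⟨ci, hci, Finset.mem_union.2 (Or.inr h3)⟩
  have hFOcard : FO.card ≤ sizeOnt O := by
    calc FO.card ≤ O.sum (fun ci => (ci.1.subF ∪ ci.2.subF).card) := Finset.card_biUnion_le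
    _ ≤ O.sum (fun ci => ci.1.size + ci.2.size) := by
        refine Finset.sum_le_sum (fun ci _ => ?_)
        calc (ci.1.subF ∪ ci.2.subF).card ≤ ci.1.subF.card + ci.2.subF.card :=
              Finset.card_union_le _ _
        _ ≤ ci.1.size + ci.2.size :=
              Nat.add_le_add (Concept.card_subF_le _) (Concept.card_subF_le _)
    _ = sizeOnt O := rfl
  -- sigCard O ≥ 1
  have hn0 : 0 < n := Nat.lt_of_le_of_lt (Nat.zero_le _) hn
  have hsig1 : 1 ≤ sigCard O := by
    have hne : rs ≠ [] := by
      intro h; rw [h] at hlen; simp at hlen; omega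
    obtain ⟨s₀, hs₀⟩ := List.exists_mem_of_ne_nil rs hne
    obtain ⟨ci, hci, hmem⟩ := hrs s₀ hs₀
    rw [Finset.mem_coe] at hci
    have hmem' : s₀ ∈ ci.1.rolesF ∪ ci.2.rolesF := by
      rw [Finset.mem_union]
      rcases hmem with h | h
      · exact Or.inl (Concept.mem_rolesF_iff.2 h)
      · exact Or.inr (Concept.mem_rolesF_iff.2 h)
    have : 0 < (O.biUnion fun ci => ci.1.rolesF ∪ ci.2.rolesF).card :=
      Finset.card_pos.2 ⟨s₀, Finset.mem_biUnion.2 ⟨ci, hci, hmem'⟩⟩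
    unfold sigCard
    omega
  -- the chain of type sets
  set X : ℕ → Finset (Finset (Concept Cn R)) :=
    (fun i => FO.powerset.filter (fun t => TEnt FO (↑O : Ontology Cn R) t (exChain (rs.drop i))))
    with hXdef
  have hXmem : ∀ (i : ℕ) (t : Finset (Concept Cn R)),
      t ∈ X i ↔ t ⊆ FO ∧ TEnt FO (↑O : Ontology Cn R) t (exChain (rs.drop i)) := by
    intro i t
    rw [hXdef]
    simp [Finset.mem_filter, Finset.mem_powerset]
  -- segment reachability
  have hseg : ∀ (k a : ℕ), a + k ≤ n → ∀ (I : Interp Cn R), I.isModel ↑O →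
      ∀ x', tyF FO I x' ∈ X a →
      ∃ y, ReachL I ((rs.drop a).take k) x' y ∧ tyF FO I y ∈ X (a + k) := by
    intro k
    induction k with
    | zero =>
        intro a _ I hI x' hx'
        exact ⟨x', rfl, hx'⟩
    | succ k ih =>
        intro a h I hI x' hx'
        have ha : a < rs.length := by omega
        have hdrop : rs.drop a = rs[a] :: rs.drop (a + 1) := List.drop_eq_getElem_cons ha
        have hTE : TEnt FO (↑O : Ontology Cn R) (tyF FO I x')
            (exChain (rs[a] :: rs.drop (a + 1))) := by
          have := ((hXmem a (tyF FO I x')).1 hx').2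
          rwa [hdrop] at this
        obtain ⟨y, hedge, hTE'⟩ :=
          decomp FO (↑O : Ontology Cn R) hFsub hFELU hOF rs[a] (rs.drop (a + 1))
            (tyF FO I x') hTE I hI x' rfl
        have hy : tyF FO I y ∈ X (a + 1) := (hXmem (a + 1) _).2 ⟨tyF_subset, hTE'⟩
        obtain ⟨w, hr, hw⟩ := ih (a + 1) (by omega) I hI y hy
        refine ⟨w, ?_, ?_⟩
        · rw [hdrop]
          exact ⟨y, hedge, hr⟩
        · have : a + 1 + k = a + (k + 1) := by omega
          rwa [this] at hw
  -- pigeonhole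
  have hpow : (FO.powerset.powerset).card ≤ 2 ^ 2 ^ sizeOnt O := by
    rw [Finset.card_powerset, Finset.card_powerset]
    exact Nat.pow_le_pow_right (by norm_num)
      (Nat.pow_le_pow_right (by norm_num) hFOcard)
  have hlt : (FO.powerset.powerset).card < (Finset.range (n + 1)).card := by
    rw [Finset.card_range]
    have : sigCard O * 2 ^ 2 ^ sizeOnt O ≥ 1 * 2 ^ 2 ^ sizeOnt O :=
      Nat.mul_le_mul_right _ hsig1
    omega
  obtain ⟨i, hi, j, hj, hij, hXij⟩ :=
    Finset.exists_ne_map_eq_of_card_lt_of_maps_to hlt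
      (fun a (_ : a ∈ Finset.range (n + 1)) =>
        (Finset.mem_powerset.2 (Finset.filter_subset _ _) : X a ∈ FO.powerset.powerset))
  rw [Finset.mem_range] at hi hj
  -- wlog i < j
  obtain ⟨i, j, hilt, hjn, hXeq⟩ :
      ∃ i j : ℕ, i < j ∧ j ≤ n ∧ X i = X j := by
    rcases Nat.lt_or_ge i j with h | h
    · exact ⟨i, j, h, by omega, hXij⟩
    · have : j < i := by omega
      exact ⟨j, i, this, by omega, hXij.symm⟩
  clear hij hXij hi hj
  -- the pumping loop
  set L : List R := (rs.drop i).take (j - i) with hLdef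
  have hloopstep : ∀ (I : Interp Cn R), I.isModel ↑O → ∀ x', tyF FO I x' ∈ X i →
      ∃ y, ReachL I L x' y ∧ tyF FO I y ∈ X i := by
    intro I hI x' hx'
    obtain ⟨y, hr, hy⟩ := hseg (j - i) i (by omega) I hI x' hx'
    rw [show i + (j - i) = j by omega] at hy
    rw [← hXeq] at hy
    exact ⟨y, hr, hy⟩
  have hloop : ∀ (k : ℕ) (I : Interp Cn R), I.isModel ↑O → ∀ x', tyF FO I x' ∈ X i →
      ∃ y, ReachL I ((List.replicate k L).flatten) x' y ∧ tyF FO I y ∈ X i := by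
    intro k
    induction k with
    | zero => intro I hI x' hx'; exact ⟨x', rfl, hx'⟩
    | succ k ih =>
        intro I hI x' hx'
        obtain ⟨y, hr1, hy⟩ := hloopstep I hI x' hx'
        obtain ⟨w, hr2, hw⟩ := ih I hI y hy
        refine ⟨w, ?_, hw⟩
        rw [show List.replicate (k + 1) L = L :: List.replicate k L from rfl,
          List.flatten_cons]
        exact ReachL_append.2 ⟨y, hr1, hr2⟩
  -- the pumped word
  refine ⟨r, D, rs.take i ++ (List.replicate m L).flatten, ?_, ?_, hD, ?_⟩
  · -- length
    have hLlen : L.length = j - i := by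
      rw [hLdef, List.length_take, List.length_drop]
      omega
    have hjoin : ((List.replicate m L).flatten).length = m * L.length := by
      simp [List.length_flatten]
    rw [List.length_append, hjoin, hLlen]
    have : m * 1 ≤ m * (j - i) := Nat.mul_le_mul_left m (by omega)
    omega
  · -- roles
    intro s hs
    rw [List.mem_append] at hs
    rcases hs with h | h
    · exact hrs s (List.mem_of_mem_take h)
    · rw [List.mem_flatten] at h
      obtain ⟨l', hl', hsl⟩ := h
      rw [List.eq_of_mem_replicate hl'] at hsl
      rw [hLdef] at hsl
      exact hrs s (List.mem_of_mem_drop (List.mem_of_mem_take hsl))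
  · -- entailment
    intro I hI x hx
    have ht0 : tyF FO I x ∈ X 0 := by
      refine (hXmem 0 _).2 ⟨tyF_subset, ?_⟩
      intro I' hI' x'' hty
      have hDin : D ∈ tyF FO I' x'' := by
        rw [hty, mem_tyF]
        exact ⟨hDFO, hx⟩
      rw [mem_tyF] at hDin
      have := hent I' hI' hDin.2
      simpa using this
    obtain ⟨y, hr1, hy⟩ := hseg i 0 (by omega) I hI x ht0
    rw [Nat.zero_add] at hy
    obtain ⟨w, hr2, _⟩ := hloop m I hI y hy
    rw [mem_exChain_iff]
    refine ⟨w, ReachL_append.2 ⟨y, ?_, hr2⟩⟩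
    simpa using hr1
theorem stmt6 {Cn R : Type} [DecidableEq Cn] [DecidableEq R]
    (O : Finset (Concept Cn R × Concept Cn R))
    (hO : ∀ ci ∈ O, ci.1.isELU ∧ ci.2.isELU)
    (n : ℕ) (hn : sigCard O * 2 ^ (2 ^ sizeOnt O) < n)
    (r : R) (D : Concept Cn R) (rs : List R)
    (hlen : rs.length = n)
    (hrs : ∀ s ∈ rs, s ∈ sigR (↑O : Ontology Cn R))
    (hD : ∃ ci ∈ O, Concept.ex r D ∈ ci.2.sub)
    (hent : entails (↑O : Ontology Cn R) D (exChain rs)) :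
    ∀ m : ℕ, ∃ (r' : R) (D' : Concept Cn R) (rs' : List R),
      m ≤ rs'.length ∧ (∀ s ∈ rs', s ∈ sigR (↑O : Ontology Cn R)) ∧
      (∃ ci ∈ O, Concept.ex r' D' ∈ ci.2.sub) ∧
      entails (↑O : Ontology Cn R) D' (exChain rs') := by
  exact stmt6' O hO n hn r D rs hlen hrs hD hent
end DL
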